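/- arXiv:2207.09803 — 2 statements merged into one kernel-verified Lean document; each statement's English description precedes it below -/
import Mathlib

section
/- Let G be a finite simple graph whose vertex set is partitioned into sets M_1, …, M_d such that each M_i is a clique or an independent set of G and any two distinct parts are either completely joined by edges or have no edges between them. Let E_Q be the set of pairs {i, j} with i ≠ j such that M_i and M_j are completely joined, let m_i = |M_i|, and let 0 ≤ k ≤ |V(G)|. Then the maximum of e_G(S) over all vertex subsets S with |S| = k equals the maximum, over all integer vectors (x_1, …, x_d) with 0 ≤ x_i ≤ m_i for all i and Σ_i x_i = k, of Σ_{{i,j} ∈ E_Q} x_i x_j + Σ_{i : M_i is a clique} x_i (x_i − 1)/2. -/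
open Classical Finset

/-- Number of edges of the induced subgraph `G[S]`. -/
noncomputable def edgesIn {V : Type*} [Fintype V] (G : SimpleGraph V) (S : Finset V) : ℕ :=
  (G.edgeFinset.filter fun e => ∀ v ∈ e, v ∈ S).card

lemma two_mul_half_pred (n : ℕ) : 2 * (n * (n - 1) / 2) = n * (n - 1) := by
  apply Nat.mul_div_cancel'
  rcases Nat.even_or_odd n with h | h
  · exact Dvd.dvd.mul_right h.two_dvd _
  · rcases n with _ | m
    · simp
    · exact Dvd.dvd.mul_left (by simpa using (Nat.Odd.sub_odd h odd_one).two_dvd) _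

lemma sq_sub (n : ℕ) : n * n - n = n * (n - 1) := by
  rcases n with _ | m
  · simp
  · rw [Nat.succ_sub_one, Nat.mul_succ, Nat.add_sub_cancel]

lemma edgesIn_count {V : Type*} [Fintype V] [DecidableEq V]
    (G : SimpleGraph V) (d : ℕ) (M : Fin d → Finset V)
    (hdisj : ∀ i j, i ≠ j → Disjoint (M i) (M j))
    (hcover : ∀ v : V, ∃ i, v ∈ M i)
    (hmod : ∀ i, G.IsClique (M i : Set V) ∨ ∀ u ∈ M i, ∀ v ∈ M i, ¬ G.Adj u v)
    (hjoin : ∀ i j, i ≠ j →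
      (∀ u ∈ M i, ∀ v ∈ M j, G.Adj u v) ∨ (∀ u ∈ M i, ∀ v ∈ M j, ¬ G.Adj u v))
    (S : Finset V) :
    edgesIn G S =
      ∑ p ∈ Finset.univ.filter (fun p : Fin d × Fin d =>
            p.1 < p.2 ∧ ∀ u ∈ M p.1, ∀ v ∈ M p.2, G.Adj u v),
          (S ∩ M p.1).card * (S ∩ M p.2).card
        + ∑ i ∈ Finset.univ.filter (fun i : Fin d => G.IsClique (M i : Set V)),
          (S ∩ M i).card * ((S ∩ M i).card - 1) / 2 := by
  choose f hf using hcover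
  have hmem : ∀ v i, v ∈ M i ↔ f v = i := by
    intro v i
    constructor
    · intro hv
      by_contra h
      exact Finset.disjoint_left.mp (hdisj _ _ h) (hf v) hv
    · rintro rfl; exact hf v
  set c : Fin d → ℕ := fun i => (S ∩ M i).card with hc
  set t : Fin d × Fin d → ℕ := fun p =>
    (((S ∩ M p.1) ×ˢ (S ∩ M p.2)).filter fun uv => G.Adj uv.1 uv.2).card with ht
  set Q : Fin d × Fin d → Prop := fun p => ∀ u ∈ M p.1, ∀ v ∈ M p.2, G.Adj u v with hQ
  -- restricted graph
  set G' : SimpleGraph V :=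
    { Adj := fun u v => G.Adj u v ∧ u ∈ S ∧ v ∈ S
      symm := ⟨fun u v h => ⟨h.1.symm, h.2.2, h.2.1⟩⟩
      loopless := ⟨fun v h => G.loopless.irrefl v h.1⟩ } with hG'
  have h1 : edgesIn G S = G'.edgeFinset.card := by
    rw [edgesIn]
    congr 1
    ext e
    induction e using Sym2.ind with
    | _ u v =>
      simp only [Finset.mem_filter, SimpleGraph.mem_edgeFinset, SimpleGraph.mem_edgeSet,
        Sym2.mem_iff, hG']
      constructor
      · rintro ⟨h, hm⟩; exact ⟨h, hm u (Or.inl rfl), hm v (Or.inr rfl)⟩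
      · rintro ⟨h, hu, hv⟩
        exact ⟨h, by rintro w (rfl | rfl) <;> assumption⟩
  have h2 : 2 * G'.edgeFinset.card =
      ((univ : Finset (V × V)).filter fun p => G'.Adj p.1 p.2).card := by
    have := SimpleGraph.two_mul_card_edgeFinset (G := G')
    convert this using 2
  have h3 : ((univ : Finset (V × V)).filter fun p => G'.Adj p.1 p.2).card =
      ∑ p ∈ (univ : Finset (Fin d × Fin d)), t p := by
    rw [Finset.card_eq_sum_card_fiberwise
      (f := fun uv : V × V => (f uv.1, f uv.2)) (t := univ) (fun x _ => mem_univ _)]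
    apply Finset.sum_congr rfl
    intro p _
    congr 1
    ext ⟨u, v⟩
    simp only [Finset.mem_filter, Finset.mem_univ, true_and, Finset.mem_product,
      Finset.mem_inter, hG', Prod.ext_iff, ← hmem]
    tauto
  have tval : ∀ p : Fin d × Fin d, p.1 ≠ p.2 →
      t p = if Q p then c p.1 * c p.2 else 0 := by
    intro p hne
    by_cases hq : Q p
    · rw [if_pos hq, ht]
      have : ((S ∩ M p.1) ×ˢ (S ∩ M p.2)).filter (fun uv => G.Adj uv.1 uv.2)
          = (S ∩ M p.1) ×ˢ (S ∩ M p.2) := by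
        apply Finset.filter_true_of_mem
        rintro ⟨u, v⟩ huv
        rw [Finset.mem_product, Finset.mem_inter, Finset.mem_inter] at huv
        exact hq u huv.1.2 v huv.2.2
      simp only [this, Finset.card_product, hc]
    · rw [if_neg hq]
      have hnone : ∀ u ∈ M p.1, ∀ v ∈ M p.2, ¬ G.Adj u v :=
        (hjoin p.1 p.2 hne).resolve_left hq
      rw [ht]
      convert Finset.card_empty
      apply Finset.filter_false_of_mem
      rintro ⟨u, v⟩ huv
      rw [Finset.mem_product, Finset.mem_inter, Finset.mem_inter] at huv
      exact hnone u huv.1.2 v huv.2.2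
  have tdiag : ∀ i : Fin d,
      t (i, i) = if G.IsClique (M i : Set V) then c i * (c i - 1) else 0 := by
    intro i
    by_cases hcl : G.IsClique (M i : Set V)
    · rw [if_pos hcl, ht]
      have : ((S ∩ M i) ×ˢ (S ∩ M i)).filter (fun uv => G.Adj uv.1 uv.2)
          = (S ∩ M i).offDiag := by
        ext ⟨u, v⟩
        simp only [Finset.mem_filter, Finset.mem_product, Finset.mem_offDiag,
          Finset.mem_inter]
        constructor
        · rintro ⟨⟨hu, hv⟩, hadj⟩
          exact ⟨hu, hv, hadj.ne⟩
        · rintro ⟨hu, hv, hne⟩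
          exact ⟨⟨hu, hv⟩, hcl (Finset.mem_coe.mpr hu.2) (Finset.mem_coe.mpr hv.2) hne⟩
      simp only [ht, this, Finset.offDiag_card, sq_sub, hc]
    · rw [if_neg hcl, ht]
      have hnone := (hmod i).resolve_left hcl
      convert Finset.card_empty
      apply Finset.filter_false_of_mem
      rintro ⟨u, v⟩ huv
      rw [Finset.mem_product, Finset.mem_inter, Finset.mem_inter] at huv
      exact hnone u huv.1.2 v huv.2.2
  have hQs : ∀ i j : Fin d, Q (j, i) ↔ Q (i, j) := by
    intro i j
    constructor <;> exact fun h u hu v hv => (h v hv u hu).symm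
  -- split the sum
  have hsplit : ∑ p ∈ (univ : Finset (Fin d × Fin d)), t p =
      2 * ∑ p ∈ univ.filter (fun p : Fin d × Fin d => p.1 < p.2 ∧ Q p), c p.1 * c p.2
      + ∑ i ∈ univ.filter (fun i : Fin d => G.IsClique (M i : Set V)), c i * (c i - 1) := by
    rw [← Finset.sum_filter_add_sum_filter_not (univ : Finset (Fin d × Fin d))
      (fun p => p.1 = p.2) t]
    have hdiagsum : ∑ p ∈ univ.filter (fun p : Fin d × Fin d => p.1 = p.2), t p =
        ∑ i ∈ univ.filter (fun i : Fin d => G.IsClique (M i : Set V)), c i * (c i - 1) := by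
      rw [show (univ.filter (fun p : Fin d × Fin d => p.1 = p.2))
          = univ.image (fun i : Fin d => (i, i)) by
        ext ⟨a, b⟩
        simp only [Finset.mem_filter, Finset.mem_univ, true_and, Finset.mem_image]
        constructor
        · rintro rfl; exact ⟨a, rfl⟩
        · rintro ⟨i, h⟩; cases h; rfl]
      rw [Finset.sum_image (by intro a _ b _ h; exact (Prod.ext_iff.mp h).1)]
      rw [Finset.sum_congr rfl (fun i _ => tdiag i)]
      exact (Finset.sum_filter _ _).symm
    have hoff : ∑ p ∈ univ.filter (fun p : Fin d × Fin d => ¬ p.1 = p.2), t p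
        = 2 * ∑ p ∈ univ.filter (fun p : Fin d × Fin d => p.1 < p.2 ∧ Q p),
            c p.1 * c p.2 := by
      rw [Finset.sum_congr rfl
        (fun p hp => tval p (by simpa using (Finset.mem_filter.mp hp).2))]
      rw [← Finset.sum_filter, Finset.filter_filter]
      rw [← Finset.sum_filter_add_sum_filter_not
        (univ.filter (fun p : Fin d × Fin d => ¬ p.1 = p.2 ∧ Q p))
        (fun p => p.1 < p.2), Finset.filter_filter, Finset.filter_filter]
      have E1 : univ.filter (fun p : Fin d × Fin d => (¬ p.1 = p.2 ∧ Q p) ∧ p.1 < p.2)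
          = univ.filter (fun p : Fin d × Fin d => p.1 < p.2 ∧ Q p) := by
        ext p
        simp only [Finset.mem_filter, Finset.mem_univ, true_and]
        constructor
        · rintro ⟨⟨_, hq⟩, hlt⟩; exact ⟨hlt, hq⟩
        · rintro ⟨hlt, hq⟩; exact ⟨⟨ne_of_lt hlt, hq⟩, hlt⟩
      have E2 : univ.filter (fun p : Fin d × Fin d => (¬ p.1 = p.2 ∧ Q p) ∧ ¬ p.1 < p.2)
          = univ.filter (fun p : Fin d × Fin d => p.2 < p.1 ∧ Q p) := by
        ext p
        simp only [Finset.mem_filter, Finset.mem_univ, true_and]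
        constructor
        · rintro ⟨⟨hne, hq⟩, hnlt⟩
          exact ⟨(lt_or_gt_of_ne hne).resolve_left hnlt, hq⟩
        · rintro ⟨hgt, hq⟩
          exact ⟨⟨ne_of_gt hgt, hq⟩, lt_asymm hgt⟩
      rw [E1, E2]
      have hswap : ∑ p ∈ univ.filter (fun p : Fin d × Fin d => p.2 < p.1 ∧ Q p),
          c p.1 * c p.2
          = ∑ p ∈ univ.filter (fun p : Fin d × Fin d => p.1 < p.2 ∧ Q p),
            c p.1 * c p.2 := by
        apply Finset.sum_nbij' (i := fun p : Fin d × Fin d => Prod.swap p)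
          (j := fun p : Fin d × Fin d => Prod.swap p)
        · intro p hp
          simp only [Finset.mem_filter, Finset.mem_univ, true_and] at hp ⊢
          exact ⟨hp.1, (hQs p.2 p.1).mp hp.2⟩
        · intro p hp
          simp only [Finset.mem_filter, Finset.mem_univ, true_and] at hp ⊢
          exact ⟨hp.1, (hQs p.1 p.2).mpr hp.2⟩
        · intro p _; rfl
        · intro p _; rfl
        · intro p _; exact mul_comm _ _
      rw [hswap, two_mul]
    rw [hdiagsum, hoff]
    omega
  have hB : 2 * ∑ i ∈ univ.filter (fun i : Fin d => G.IsClique (M i : Set V)),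
      (S ∩ M i).card * ((S ∩ M i).card - 1) / 2
      = ∑ i ∈ univ.filter (fun i : Fin d => G.IsClique (M i : Set V)),
        (S ∩ M i).card * ((S ∩ M i).card - 1) := by
    rw [Finset.mul_sum]
    exact Finset.sum_congr rfl fun i _ => two_mul_half_pred _
  apply Nat.eq_of_mul_eq_mul_left (show (0:ℕ) < 2 by norm_num)
  rw [h1, h2, h3, hsplit, mul_add, hB]


/-- Correctness of the IQP formulation of Densest k-Subgraph in
terms of a partition of the vertex set into modules `M 1, …, M d`: the maximum
number of edges of an induced subgraph on `k` vertices equals the maximum of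
`∑_{{i,j} ∈ E_Q} x i ⬝ x j + ∑_{i : M i clique} x i (x i − 1)/2` over all integer
vectors `x` with `0 ≤ x i ≤ m i` and `∑ x i = k`. -/
theorem densest_k_subgraph_iqp {V : Type*} [Fintype V] [DecidableEq V]
    (G : SimpleGraph V) (d : ℕ) (M : Fin d → Finset V)
    (hdisj : ∀ i j, i ≠ j → Disjoint (M i) (M j))
    (hcover : ∀ v : V, ∃ i, v ∈ M i)
    (hmod : ∀ i, G.IsClique (M i : Set V) ∨ ∀ u ∈ M i, ∀ v ∈ M i, ¬ G.Adj u v)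
    (hjoin : ∀ i j, i ≠ j →
      (∀ u ∈ M i, ∀ v ∈ M j, G.Adj u v) ∨ (∀ u ∈ M i, ∀ v ∈ M j, ¬ G.Adj u v))
    (k : ℕ) (hk : k ≤ Fintype.card V) :
    sSup {n : ℕ | ∃ S : Finset V, S.card = k ∧ n = edgesIn G S} =
    sSup {n : ℕ | ∃ x : Fin d → ℕ,
      (∀ i, x i ≤ (M i).card) ∧ (∑ i, x i) = k ∧
      n = ∑ p ∈ Finset.univ.filter (fun p : Fin d × Fin d =>
            p.1 < p.2 ∧ ∀ u ∈ M p.1, ∀ v ∈ M p.2, G.Adj u v),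
          x p.1 * x p.2
        + ∑ i ∈ Finset.univ.filter (fun i : Fin d => G.IsClique (M i : Set V)),
          x i * (x i - 1) / 2} := by
  refine congrArg sSup ?_
  ext n
  simp only [Set.mem_setOf_eq]
  constructor
  · rintro ⟨S, hScard, rfl⟩
    refine ⟨fun i => (S ∩ M i).card,
      fun i => Finset.card_le_card Finset.inter_subset_right, ?_, ?_⟩
    · have hc2 := hcover
      choose f hf using hc2
      have hmem : ∀ v i, v ∈ M i ↔ f v = i := by
        intro v i
        constructor
        · intro hv
          by_contra h
          exact Finset.disjoint_left.mp (hdisj _ _ h) (hf v) hv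
        · rintro rfl; exact hf v
      rw [← hScard, Finset.card_eq_sum_card_fiberwise (f := f) (t := univ)
        (fun x _ => mem_univ _)]
      apply Finset.sum_congr rfl
      intro i _
      have hfil : S.filter (fun v => f v = i) = S ∩ M i := by
        ext v
        simp only [Finset.mem_filter, Finset.mem_inter, ← hmem]
      rw [hfil]
    · exact edgesIn_count G d M hdisj hcover hmod hjoin S
  · rintro ⟨x, hxle, hxsum, rfl⟩
    choose T hT1 hT2 using fun i => Finset.exists_subset_card_eq (hxle i)
    refine ⟨univ.biUnion T, ?_, ?_⟩
    · rw [Finset.card_biUnion]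
      · rw [Finset.sum_congr rfl fun i _ => hT2 i]; exact hxsum
      · intro i _ j _ hij
        exact Finset.disjoint_of_subset_left (hT1 i)
          (Finset.disjoint_of_subset_right (hT1 j) (hdisj i j hij))
    · have hint : ∀ i, (univ.biUnion T) ∩ M i = T i := by
        intro i
        ext v
        simp only [Finset.mem_inter, Finset.mem_biUnion, Finset.mem_univ, true_and]
        constructor
        · rintro ⟨⟨j, hvj⟩, hvi⟩
          have hij : i = j := by
            by_contra h
            exact Finset.disjoint_left.mp (hdisj i j h) hvi (hT1 j hvj)
          subst hij; exact hvj
        · intro hv; exact ⟨⟨i, hv⟩, hT1 i hv⟩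
      rw [edgesIn_count G d M hdisj hcover hmod hjoin (univ.biUnion T)]
      simp only [hint, hT2]
end

section
/- Let G be a finite simple graph and let X ⊆ V(G) be a twin cover of G, i.e., for every edge {u, v} of G, either u ∈ X or v ∈ X, or N[u] = N[v]. Then every connected component of the induced subgraph G[V(G) \ X] is a clique. Consequently, every twin cover of G is a cluster deletion set of G, and the minimum size of a cluster deletion set of G is at most the minimum size of a twin cover of G. -/
open Classical Finset

/-- `X` is a twin cover of `G`: every edge `{u, v}` satisfies `u ∈ X` or
`v ∈ X`, or `N[u] = N[v]`. -/
def IsTwinCover {V : Type*} (G : SimpleGraph V) (X : Set V) : Prop :=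
  ∀ u v : V, G.Adj u v →
    u ∈ X ∨ v ∈ X ∨ insert u (G.neighborSet u) = insert v (G.neighborSet v)

/-- `D` is a cluster deletion set of `G`: every connected component of the
induced subgraph `G[V \ D]` is a clique (equivalently, any two distinct
reachable vertices of `G[V \ D]` are adjacent). -/
def IsClusterDeletionSet {V : Type*} (G : SimpleGraph V) (D : Set V) : Prop :=
  ∀ a b : ↥(Dᶜ), (G.induce Dᶜ).Reachable a b → a ≠ b → (G.induce Dᶜ).Adj a b

/-- If `X` is a twin cover of `G`, then every connected
component of `G[V \ X]` is a clique; consequently every twin cover is a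
cluster deletion set, and the minimum size of a cluster deletion set is at
most the minimum size of a twin cover. -/
theorem twin_cover_is_cluster_deletion_set {V : Type*} [Fintype V] [DecidableEq V]
    (G : SimpleGraph V) (X : Finset V) (hX : IsTwinCover G (↑X : Set V)) :
    IsClusterDeletionSet G (↑X : Set V) ∧
    sInf {n : ℕ | ∃ D : Finset V, IsClusterDeletionSet G (↑D : Set V) ∧ D.card = n} ≤
      sInf {n : ℕ | ∃ Y : Finset V, IsTwinCover G (↑Y : Set V) ∧ Y.card = n} := by
  have key : ∀ Y : Finset V, IsTwinCover G (↑Y : Set V) →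
      IsClusterDeletionSet G (↑Y : Set V) := by
    intro Y hY
    have main : ∀ a b : ↥((↑Y : Set V)ᶜ),
        (G.induce (↑Y : Set V)ᶜ).Reachable a b →
        a = b ∨ (G.induce (↑Y : Set V)ᶜ).Adj a b := by
      intro a b ⟨w⟩
      induction w with
      | nil => exact Or.inl rfl
      | @cons a c b h p ih =>
        have hadj : G.Adj (a : V) (c : V) := h
        have htwin : insert (a : V) (G.neighborSet (a : V))
            = insert (c : V) (G.neighborSet (c : V)) := by
          rcases hY (a : V) (c : V) hadj with h1 | h1 | h1
          · exact absurd h1 a.2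
          · exact absurd h1 c.2
          · exact h1
        rcases ih with rfl | hcb
        · exact Or.inr h
        · have hb : (b : V) ∈ insert (c : V) (G.neighborSet (c : V)) :=
            Set.mem_insert_iff.2 (Or.inr hcb)
          rw [← htwin] at hb
          rcases Set.mem_insert_iff.1 hb with hba | hba
          · exact Or.inl (Subtype.ext hba.symm)
          · exact Or.inr ((G.adj_symm hba).symm)
    intro a b hr hne
    rcases main a b hr with h | h
    · exact absurd h hne
    · exact h
  refine ⟨key X hX, ?_⟩
  set S := {n : ℕ | ∃ D : Finset V, IsClusterDeletionSet G (↑D : Set V) ∧ D.card = n}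
  set T := {n : ℕ | ∃ Y : Finset V, IsTwinCover G (↑Y : Set V) ∧ Y.card = n}
  have hTS : T ⊆ S := by
    rintro n ⟨Y, hY, rfl⟩
    exact ⟨Y, key Y hY, rfl⟩
  have hTne : T.Nonempty := ⟨X.card, X, hX, rfl⟩
  exact Nat.sInf_le (hTS (Nat.sInf_mem hTne))
end
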